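/- Let a>0, α>0 and p∈[2,∞]. For λ>0 define the operator R_λ on L^p(ℝ) by (R_λ u)(x) = λ²·∫_ℝ K(x,y;iλ)·u(y) dy. Then there exists a constant C>0, independent of λ, such that ‖R_λ u‖_{L^p} ≤ C·‖u‖_{L^p} for all λ>0 and all u∈L^p(ℝ). -/

import Mathlib

open Complex MeasureTheory Filter Topology
open scoped ENNReal

noncomputable section

/-- `L1(x,y;k) = −α(2k+iα)·exp(ik|x+a|)·exp(ik|y+a|)`. -/
def L1 (a α x y : ℝ) (k : ℂ) : ℂ :=
  -(α : ℂ) * (2 * k + I * α) * Complex.exp (I * k * (|x + a| : ℝ)) *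
    Complex.exp (I * k * (|y + a| : ℝ))

/-- `L2(x,y;k) = iα²·exp(2ika)·exp(ik|x+a|)·exp(ik|y−a|)`. -/
def L2 (a α x y : ℝ) (k : ℂ) : ℂ :=
  I * (α : ℂ) ^ 2 * Complex.exp (2 * I * k * a) * Complex.exp (I * k * (|x + a| : ℝ)) *
    Complex.exp (I * k * (|y - a| : ℝ))

/-- `f(x,y;k) = L1 + L2 + L3 + L4`, with `L3(x,y;k)=L2(−x,−y;k)` and `L4(x,y;k)=L1(−x,−y;k)`. -/
def fker (a α x y : ℝ) (k : ℂ) : ℂ :=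
  L1 a α x y k + L2 a α x y k + L2 a α (-x) (-y) k + L1 a α (-x) (-y) k

/-- `D(k) = (2k+iα)² + α²·exp(4ika)`. -/
def Dden (a α : ℝ) (k : ℂ) : ℂ :=
  (2 * k + I * α) ^ 2 + (α : ℂ) ^ 2 * Complex.exp (4 * I * k * a)

/-- `U0(t;x,y) = (4πit)^{−1/2}·exp(i|x−y|²/(4t))`, principal branch. -/
def U0 (t x y : ℝ) : ℂ :=
  (4 * Real.pi * I * t : ℂ) ^ (-(1 / 2 : ℂ)) * Complex.exp (I * (|x - y| : ℝ) ^ 2 / (4 * t))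

/-- `K0(x,y;k) = (i/2k)·exp(ik|x−y|)`. -/
def K0 (x y : ℝ) (k : ℂ) : ℂ := I / (2 * k) * Complex.exp (I * k * (|x - y| : ℝ))

/-- The resolvent kernel `K(x,y;k) = K0(x,y;k) − (L1+L2+L3+L4)(x,y;k)/(2k·D(k))`. -/
def Kker (a α x y : ℝ) (k : ℂ) : ℂ :=
  K0 x y k - fker a α x y k / (2 * k * Dden a α k)

namespace Stmt12Aux

/-- `I * (I*μ) * r = -(μ*r)` as a real coercion. -/
lemma I_I_mul (μ r : ℝ) : (I * (I * (μ : ℂ)) * (r : ℝ)) = ((-(μ * r) : ℝ) : ℂ) := by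
  have h : (I * (I * (μ : ℂ)) * (r : ℝ)) = (I * I) * ((μ : ℂ) * (r : ℝ)) := by ring
  rw [h, Complex.I_mul_I]
  push_cast
  ring

lemma exp_I_I_mul (μ r : ℝ) :
    Complex.exp (I * (I * (μ : ℂ)) * (r : ℝ)) = ((Real.exp (-(μ * r)) : ℝ) : ℂ) := by
  rw [I_I_mul, Complex.ofReal_exp]

/-- Key real estimate: `|α e^{-μs} − (2μ+α) e^{-μt}| ≤ (2μ + 4aαμ) e^{-μt}`
for `0 ≤ t ≤ s ≤ t + 4a`. -/
lemma key_abs (a α μ t s : ℝ) (ha : 0 < a) (hα : 0 < α) (hμ : 0 < μ)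
    (hts : t ≤ s) (hs : s ≤ t + 4 * a) :
    |α * Real.exp (-(μ * s)) - (2 * μ + α) * Real.exp (-(μ * t))| ≤
      (2 * μ + 4 * a * α * μ) * Real.exp (-(μ * t)) := by
  have hE : Real.exp (-(μ * s)) ≤ Real.exp (-(μ * t)) := by
    apply Real.exp_le_exp.2
    nlinarith
  have hdiff : Real.exp (-(μ * t)) - Real.exp (-(μ * s)) ≤
      μ * (4 * a) * Real.exp (-(μ * t)) := by
    have h1 : Real.exp (-(μ * s)) = Real.exp (-(μ * t)) * Real.exp (-(μ * (s - t))) := by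
      rw [← Real.exp_add]; ring_nf
    have h2 : 1 - μ * (s - t) ≤ Real.exp (-(μ * (s - t))) := by
      have := Real.add_one_le_exp (-(μ * (s - t)))
      linarith
    have h3 : μ * (s - t) ≤ μ * (4 * a) := by
      apply mul_le_mul_of_nonneg_left _ hμ.le
      linarith
    have hEpos : 0 < Real.exp (-(μ * t)) := Real.exp_pos _
    calc Real.exp (-(μ * t)) - Real.exp (-(μ * s))
        = Real.exp (-(μ * t)) * (1 - Real.exp (-(μ * (s - t)))) := by rw [h1]; ring
      _ ≤ Real.exp (-(μ * t)) * (μ * (s - t)) := by nlinarith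
      _ ≤ μ * (4 * a) * Real.exp (-(μ * t)) := by nlinarith
  have h4 : α * Real.exp (-(μ * s)) - (2 * μ + α) * Real.exp (-(μ * t)) =
      α * (Real.exp (-(μ * s)) - Real.exp (-(μ * t))) - 2 * μ * Real.exp (-(μ * t)) := by ring
  rw [h4, abs_le]
  constructor
  · nlinarith [Real.exp_pos (-(μ * t)), mul_le_mul_of_nonneg_left hdiff hα.le]
  · nlinarith [Real.exp_pos (-(μ * t)), mul_le_mul_of_nonneg_left (sub_nonneg.2 hE) hα.le]

/-- Norm bound for `L1 + L2` at `k = iμ`, with cancellation. -/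
lemma L12_bound (a α μ x y : ℝ) (ha : 0 < a) (hα : 0 < α) (hμ : 0 < μ) :
    ‖L1 a α x y (I * μ) + L2 a α x y (I * μ)‖ ≤
      (2 * μ + 4 * a * α * μ) * α * Real.exp (-(μ * (|x + a| + |y + a|))) := by
  have h2k : (2 * (I * (μ : ℂ)) + I * α) = I * ((2 * μ + α : ℝ) : ℂ) := by push_cast; ring
  have h2a : (2 * I * (I * (μ : ℂ)) * (a : ℝ)) = I * (I * (μ : ℂ)) * ((2 * a : ℝ) : ℂ) := by
    push_cast; ring
  have hL1 : L1 a α x y (I * μ) =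
      -(α : ℂ) * (I * ((2 * μ + α : ℝ) : ℂ)) * ((Real.exp (-(μ * |x + a|)) : ℝ) : ℂ) *
        ((Real.exp (-(μ * |y + a|)) : ℝ) : ℂ) := by
    rw [L1, h2k, exp_I_I_mul, exp_I_I_mul]
  have hL2 : L2 a α x y (I * μ) =
      I * (α : ℂ) ^ 2 * ((Real.exp (-(μ * (2 * a))) : ℝ) : ℂ) *
        ((Real.exp (-(μ * |x + a|)) : ℝ) : ℂ) * ((Real.exp (-(μ * |y - a|)) : ℝ) : ℂ) := by
    rw [L2, h2a, exp_I_I_mul, exp_I_I_mul, exp_I_I_mul]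
  have hsum : L1 a α x y (I * μ) + L2 a α x y (I * μ) =
      I * ((Real.exp (-(μ * |x + a|)) : ℝ) : ℂ) * ((α : ℂ) *
        (((α * Real.exp (-(μ * (2 * a + |y - a|))) -
          (2 * μ + α) * Real.exp (-(μ * |y + a|))) : ℝ) : ℂ)) := by
    rw [hL1, hL2]
    have : Real.exp (-(μ * (2 * a + |y - a|))) =
        Real.exp (-(μ * (2 * a))) * Real.exp (-(μ * |y - a|)) := by
      rw [← Real.exp_add]; ring_nf
    push_cast [this]
    ring
  rw [hsum]
  simp only [norm_mul, Complex.norm_I, Complex.norm_real, Real.norm_eq_abs, one_mul]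
  rw [_root_.abs_of_pos (Real.exp_pos _), _root_.abs_of_pos hα]
  have hkey := key_abs a α μ (|y + a|) (2 * a + |y - a|) ha hα hμ
    (by
      have := abs_sub_abs_le_abs_sub (y + a) (y - a)
      have h2 : |(y + a) - (y - a)| = 2 * a := by
        rw [show (y + a) - (y - a) = 2 * a by ring, abs_of_pos (by linarith)]
      linarith)
    (by
      have := abs_sub_abs_le_abs_sub (y - a) (y + a)
      have h2 : |(y - a) - (y + a)| = 2 * a := by
        rw [show (y - a) - (y + a) = -(2 * a) by ring, abs_neg, abs_of_pos (by linarith)]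
      linarith)
  have hEsplit : Real.exp (-(μ * (|x + a| + |y + a|))) =
      Real.exp (-(μ * |x + a|)) * Real.exp (-(μ * |y + a|)) := by
    rw [← Real.exp_add]; ring_nf
  rw [hEsplit]
  have hEx := Real.exp_pos (-(μ * |x + a|))
  calc Real.exp (-(μ * |x + a|)) * (α *
        |α * Real.exp (-(μ * (2 * a + |y - a|))) - (2 * μ + α) * Real.exp (-(μ * |y + a|))|)
      ≤ Real.exp (-(μ * |x + a|)) * (α * ((2 * μ + 4 * a * α * μ) * Real.exp (-(μ * |y + a|)))) := by
        apply mul_le_mul_of_nonneg_left _ hEx.le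
        exact mul_le_mul_of_nonneg_left hkey hα.le
    _ = (2 * μ + 4 * a * α * μ) * α * (Real.exp (-(μ * |x + a|)) * Real.exp (-(μ * |y + a|))) := by
        ring

/-- Lower bound on `‖D(iμ)‖`. -/
lemma Dden_bound (a α μ : ℝ) (ha : 0 < a) (hα : 0 < α) (hμ : 0 < μ) :
    4 * μ * α ≤ ‖Dden a α (I * μ)‖ := by
  have h4a : (4 * I * (I * (μ : ℂ)) * (a : ℝ)) = I * (I * (μ : ℂ)) * ((4 * a : ℝ) : ℂ) := by
    push_cast; ring
  have hsq : (2 * (I * (μ : ℂ)) + I * α) ^ 2 = (((-(2 * μ + α) ^ 2 : ℝ)) : ℂ) := by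
    have : (2 * (I * (μ : ℂ)) + I * α) = I * ((2 * μ + α : ℝ) : ℂ) := by push_cast; ring
    rw [this, mul_pow, Complex.I_sq]
    push_cast; ring
  have hD : Dden a α (I * μ) =
      ((α ^ 2 * Real.exp (-(μ * (4 * a))) - (2 * μ + α) ^ 2 : ℝ) : ℂ) := by
    rw [Dden, h4a, exp_I_I_mul, hsq]
    push_cast; ring
  rw [hD, Complex.norm_real, Real.norm_eq_abs, abs_sub_comm]
  have hexp0 : 0 < Real.exp (-(μ * (4 * a))) := Real.exp_pos _
  have hexp1 : Real.exp (-(μ * (4 * a))) ≤ 1 := Real.exp_le_one_iff.mpr (by nlinarith)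
  rw [_root_.abs_of_nonneg
    (by nlinarith : (0:ℝ) ≤ (2 * μ + α) ^ 2 - α ^ 2 * Real.exp (-(μ * (4 * a))))]
  nlinarith

/-- Full kernel bound: `‖K(x,y;iμ)‖ ≤ ((1+aα)/μ) e^{-μ|x-y|}`. -/
lemma kernel_bound (a α μ x y : ℝ) (ha : 0 < a) (hα : 0 < α) (hμ : 0 < μ) :
    ‖Kker a α x y (I * μ)‖ ≤ (1 + a * α) / μ * Real.exp (-(μ * |x - y|)) := by
  have hExy := Real.exp_pos (-(μ * |x - y|))
  -- bound on K0
  have hK0 : ‖K0 x y (I * μ)‖ = 1 / (2 * μ) * Real.exp (-(μ * |x - y|)) := by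
    rw [K0, exp_I_I_mul, norm_mul, Complex.norm_real, Real.norm_eq_abs,
      abs_of_pos (Real.exp_pos _), norm_div, Complex.norm_I]
    have : ‖(2 : ℂ) * (I * (μ : ℂ))‖ = 2 * μ := by
      rw [norm_mul, norm_mul, Complex.norm_I, Complex.norm_real]
      simp [abs_of_pos hμ]
    rw [this]
  -- bound on fker
  have htri1 : |x - y| ≤ |x + a| + |y + a| := by
    have h := abs_sub (x + a) (y + a)
    rwa [show (x + a) - (y + a) = x - y from by ring] at h
  have htri2 : |x - y| ≤ |-x + a| + |-y + a| := by
    have h := abs_sub (-y + a) (-x + a)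
    rw [show (-y + a) - (-x + a) = x - y from by ring] at h
    linarith
  have hmono : ∀ s t : ℝ, s ≤ t → Real.exp (-(μ * t)) ≤ Real.exp (-(μ * s)) := by
    intro s t hst
    apply Real.exp_le_exp.2
    nlinarith
  have hf12 := L12_bound a α μ x y ha hα hμ
  have hf34 := L12_bound a α μ (-x) (-y) ha hα hμ
  have hfa : ‖fker a α x y (I * μ)‖ ≤
      2 * ((2 * μ + 4 * a * α * μ) * α) * Real.exp (-(μ * |x - y|)) := by
    have hsplit : fker a α x y (I * μ) =
        (L1 a α x y (I * μ) + L2 a α x y (I * μ)) +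
          (L1 a α (-x) (-y) (I * μ) + L2 a α (-x) (-y) (I * μ)) := by
      rw [fker]; ring
    have hco : (0 : ℝ) ≤ (2 * μ + 4 * a * α * μ) * α := by positivity
    calc ‖fker a α x y (I * μ)‖ ≤
        ‖L1 a α x y (I * μ) + L2 a α x y (I * μ)‖ +
          ‖L1 a α (-x) (-y) (I * μ) + L2 a α (-x) (-y) (I * μ)‖ := by
          rw [hsplit]; exact norm_add_le _ _
      _ ≤ (2 * μ + 4 * a * α * μ) * α * Real.exp (-(μ * (|x + a| + |y + a|))) +
          (2 * μ + 4 * a * α * μ) * α * Real.exp (-(μ * (|-x + a| + |-y + a|))) := by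
          exact add_le_add hf12 hf34
      _ ≤ (2 * μ + 4 * a * α * μ) * α * Real.exp (-(μ * |x - y|)) +
          (2 * μ + 4 * a * α * μ) * α * Real.exp (-(μ * |x - y|)) := by
          apply add_le_add
          · exact mul_le_mul_of_nonneg_left (hmono _ _ htri1) hco
          · exact mul_le_mul_of_nonneg_left (hmono _ _ htri2) hco
      _ = 2 * ((2 * μ + 4 * a * α * μ) * α) * Real.exp (-(μ * |x - y|)) := by ring
  -- bound on the denominator
  have hden : 2 * μ * (4 * μ * α) ≤ ‖2 * (I * (μ : ℂ)) * Dden a α (I * μ)‖ := by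
    rw [norm_mul]
    have h2 : ‖(2 : ℂ) * (I * (μ : ℂ))‖ = 2 * μ := by
      rw [norm_mul, norm_mul, Complex.norm_I, Complex.norm_real]
      simp [abs_of_pos hμ]
    rw [h2]
    exact mul_le_mul_of_nonneg_left (Dden_bound a α μ ha hα hμ) (by positivity)
  have hdenpos : (0 : ℝ) < 2 * μ * (4 * μ * α) := by positivity
  have hfrac : ‖fker a α x y (I * μ) / (2 * (I * (μ : ℂ)) * Dden a α (I * μ))‖ ≤
      2 * ((2 * μ + 4 * a * α * μ) * α) * Real.exp (-(μ * |x - y|)) / (2 * μ * (4 * μ * α)) := by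
    rw [norm_div]
    apply div_le_div₀ (by positivity) hfa hdenpos hden
  have : ‖Kker a α x y (I * μ)‖ ≤ ‖K0 x y (I * μ)‖ +
      ‖fker a α x y (I * μ) / (2 * (I * (μ : ℂ)) * Dden a α (I * μ))‖ := by
    rw [Kker]; exact norm_sub_le _ _
  refine this.trans ?_
  rw [hK0]
  refine (add_le_add_right hfrac _).trans (le_of_eq ?_)
  field_simp [hμ.ne', hα.ne']
  ring
/-- Reflection invariance of the Lebesgue lintegral on `ℝ`. -/
lemma lintegral_comp_neg (f : ℝ → ℝ≥0∞) : ∫⁻ z, f (-z) = ∫⁻ z, f z := by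
  calc ∫⁻ z, f (-z) = ∫⁻ z, f z ∂(Measure.map (MeasurableEquiv.neg ℝ) volume) :=
        (lintegral_map_equiv f (MeasurableEquiv.neg ℝ)).symm
    _ = ∫⁻ z, f z := by
        congr 1
        exact Measure.map_neg_eq_self (volume : Measure ℝ)

lemma lintegral_shift (g : ℝ → ℝ≥0∞) (x : ℝ) : ∫⁻ y, g (x - y) = ∫⁻ z, g z := by
  have h1 : (∫⁻ y, g (x + -y)) = ∫⁻ y, g (x + y) :=
    lintegral_comp_neg (fun z => g (x + z))
  simp only [← sub_eq_add_neg] at h1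
  rw [h1, lintegral_add_left_eq_self g x]

lemma lintegral_shift' (g : ℝ → ℝ≥0∞) (y : ℝ) : ∫⁻ x, g (x - y) = ∫⁻ z, g z :=
  lintegral_sub_right_eq_self g y

/-- Young's inequality for convolution with an `ℝ≥0∞`-valued kernel, `L^q` with `1 < q < ∞`. -/
lemma young {q : ℝ} (hq : 1 < q) (g : ℝ → ℝ≥0∞) (hg : Measurable g)
    (hgtop : ∫⁻ z, g z ≠ ∞) (f : ℝ → ℝ≥0∞) (hf : AEMeasurable f volume) :
    ∫⁻ x, (∫⁻ y, g (x - y) * f y) ^ q ≤ (∫⁻ z, g z) ^ q * ∫⁻ x, f x ^ q := by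
  obtain ⟨f', hf'm, hff'⟩ := hf
  have hinner : ∀ x, (∫⁻ y, g (x - y) * f y) = ∫⁻ y, g (x - y) * f' y := by
    intro x
    refine lintegral_congr_ae ?_
    filter_upwards [hff'] with y hy
    rw [hy]
  have houter : (∫⁻ x, f x ^ q) = ∫⁻ x, f' x ^ q := by
    refine lintegral_congr_ae ?_
    filter_upwards [hff'] with y hy
    rw [hy]
  simp only [hinner, houter]
  set G := ∫⁻ z, g z with hG
  have hq0 : (0 : ℝ) < q := by linarith
  have hq't : Real.HolderConjugate (Real.conjExponent q) q :=
    (Real.HolderConjugate.conjExponent hq).symm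
  set q' : ℝ := Real.conjExponent q with hq'def
  have hq'0 : (0 : ℝ) < q' := hq't.pos
  have hGq' : G ^ (q / q') ≠ ∞ :=
    ENNReal.rpow_ne_top_of_nonneg (by positivity) hgtop
  -- pointwise Hölder step
  have key : ∀ x, (∫⁻ y, g (x - y) * f' y) ^ q ≤
      G ^ (q / q') * ∫⁻ y, g (x - y) * f' y ^ q := by
    intro x
    have hgm : Measurable fun y : ℝ => g (x - y) := hg.comp (measurable_const.sub measurable_id)
    have hstep : (∫⁻ y, g (x - y) * f' y) ≤
        (∫⁻ y, (fun y => g (x - y) ^ (1 / q')) y ^ q') ^ (1 / q') *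
          (∫⁻ y, (fun y => g (x - y) ^ (1 / q) * f' y) y ^ q) ^ (1 / q) := by
      have hol := ENNReal.lintegral_mul_le_Lp_mul_Lq volume hq't
        (f := fun y => g (x - y) ^ (1 / q')) (g := fun y => g (x - y) ^ (1 / q) * f' y)
        (hgm.pow_const _).aemeasurable ((hgm.pow_const _).mul hf'm).aemeasurable
      refine le_trans (le_of_eq ?_) hol
      refine lintegral_congr fun y => ?_
      simp only [Pi.mul_apply]
      rw [← mul_assoc, ← ENNReal.rpow_add_of_nonneg _ _ (by positivity) (by positivity)]
      have hsum1 : 1 / q' + 1 / q = 1 := by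
        rw [one_div, one_div]; exact hq't.inv_add_inv_eq_one
      rw [hsum1, ENNReal.rpow_one]
    have hI1 : (∫⁻ y, (fun y => g (x - y) ^ (1 / q')) y ^ q') = G := by
      rw [hG, ← lintegral_shift g x]
      refine lintegral_congr fun y => ?_
      rw [← ENNReal.rpow_mul, one_div, inv_mul_cancel₀ (ne_of_gt hq'0), ENNReal.rpow_one]
    have hI2 : (∫⁻ y, (fun y => g (x - y) ^ (1 / q) * f' y) y ^ q) =
        ∫⁻ y, g (x - y) * f' y ^ q := by
      refine lintegral_congr fun y => ?_
      rw [ENNReal.mul_rpow_of_nonneg _ _ hq0.le, ← ENNReal.rpow_mul, one_div,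
        inv_mul_cancel₀ (ne_of_gt hq0), ENNReal.rpow_one]
    rw [hI1, hI2] at hstep
    calc (∫⁻ y, g (x - y) * f' y) ^ q
        ≤ (G ^ (1 / q') * (∫⁻ y, g (x - y) * f' y ^ q) ^ (1 / q)) ^ q :=
          ENNReal.rpow_le_rpow hstep hq0.le
      _ = G ^ (q / q') * ∫⁻ y, g (x - y) * f' y ^ q := by
          rw [ENNReal.mul_rpow_of_nonneg _ _ hq0.le, ← ENNReal.rpow_mul, ← ENNReal.rpow_mul,
            one_div, one_div, inv_mul_cancel₀ (ne_of_gt hq0), ENNReal.rpow_one]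
          congr 2
          field_simp
  calc ∫⁻ x, (∫⁻ y, g (x - y) * f' y) ^ q
      ≤ ∫⁻ x, G ^ (q / q') * ∫⁻ y, g (x - y) * f' y ^ q := lintegral_mono key
    _ = G ^ (q / q') * ∫⁻ x, ∫⁻ y, g (x - y) * f' y ^ q := lintegral_const_mul' _ _ hGq'
    _ = G ^ (q / q') * ∫⁻ y, ∫⁻ x, g (x - y) * f' y ^ q := by
        congr 1
        apply lintegral_lintegral_swap
        exact ((hg.comp (measurable_fst.sub measurable_snd)).mul
          ((hf'm.comp measurable_snd).pow_const _)).aemeasurable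
    _ = G ^ (q / q') * ∫⁻ y, G * f' y ^ q := by
        congr 1
        refine lintegral_congr fun y => ?_
        have hm : Measurable fun x : ℝ => g (x - y) :=
          hg.comp (measurable_id.sub measurable_const)
        rw [lintegral_mul_const'' _ hm.aemeasurable, lintegral_shift' g y, ← hG]
    _ = G ^ (q / q') * (G * ∫⁻ y, f' y ^ q) := by
        rw [lintegral_const_mul' _ _ hgtop]
    _ = G ^ q * ∫⁻ y, f' y ^ q := by
        rw [← mul_assoc]
        congr 1
        have hqq' : q / q' = q - 1 := hq't.symm.div_conj_eq_sub_one
        rw [hqq',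
          show G ^ (q - 1) * G = G ^ (q - 1) * G ^ (1 : ℝ) from by rw [ENNReal.rpow_one],
          ← ENNReal.rpow_add_of_nonneg _ _ (by linarith) zero_le_one]
        norm_num
/-- Integrability of the two-sided exponential. -/
lemma integrable_exp_abs {lam : ℝ} (hlam : 0 < lam) :
    Integrable (fun z : ℝ => Real.exp (-(lam * |z|))) volume := by
  have h1 : IntegrableOn (fun x : ℝ => Real.exp (-lam * x)) (Set.Ioi 0) volume :=
    exp_neg_integrableOn_Ioi 0 hlam
  have h2 : IntegrableOn (fun z : ℝ => Real.exp (-(lam * |z|))) (Set.Ioi 0) volume := by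
    refine h1.congr_fun (fun x hx => ?_) measurableSet_Ioi
    rw [abs_of_pos hx]
    ring_nf
  have h3 : IntegrableOn (fun z : ℝ => Real.exp (-(lam * |z|))) (Set.Iic 0) volume := by
    rw [← Measure.map_neg_eq_self (volume : Measure ℝ)]
    have m : MeasurableEmbedding fun x : ℝ => -x :=
      (Homeomorph.neg ℝ).measurableEmbedding
    rw [m.integrableOn_map_iff]
    simp only [Function.comp_def, abs_neg, Set.neg_preimage, Set.neg_Iic, neg_zero]
    exact (integrableOn_Ici_iff_integrableOn_Ioi enorm_ne_top).mpr h2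
  have := h3.union h2
  rwa [Set.Iic_union_Ioi, integrableOn_univ] at this

/-- The value of the lintegral of the two-sided exponential kernel. -/
lemma lintegral_exp_abs {lam c : ℝ} (hlam : 0 < lam) (hc : 0 < c) :
    ∫⁻ z : ℝ, ENNReal.ofReal (c * lam * Real.exp (-(lam * |z|))) =
      ENNReal.ofReal (2 * c) := by
  have hInt : Integrable (fun z : ℝ => c * lam * Real.exp (-(lam * |z|))) volume :=
    (integrable_exp_abs hlam).const_mul _
  rw [← ofReal_integral_eq_lintegral_ofReal hInt
    (Filter.Eventually.of_forall fun z => by positivity)]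
  congr 1
  rw [MeasureTheory.integral_const_mul]
  have habs : ∫ z : ℝ, Real.exp (-(lam * |z|)) =
      2 * ∫ x in Set.Ioi (0 : ℝ), Real.exp (-(lam * x)) :=
    integral_comp_abs (f := fun r => Real.exp (-(lam * r)))
  have hIoi : ∫ x in Set.Ioi (0 : ℝ), Real.exp (-(lam * x)) = lam⁻¹ := by
    have h := integral_comp_mul_left_Ioi (fun u : ℝ => Real.exp (-u)) 0 hlam
    simp only [mul_zero, integral_exp_neg_Ioi_zero, smul_eq_mul, mul_one] at h
    exact h
  rw [habs, hIoi]
  field_simp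

end Stmt12Aux

open Stmt12Aux in
/-- for `a>0`, `α>0` and `p∈[2,∞]`, the operators
`(R_λ u)(x) = λ²·∫ K(x,y;iλ)u(y)dy` are bounded on `L^p(ℝ)` uniformly in `λ>0`. -/
theorem stmt12 (a α : ℝ) (ha : 0 < a) (hα : 0 < α) (p : ℝ≥0∞) (hp : 2 ≤ p) :
    ∃ C > 0, ∀ lam : ℝ, 0 < lam → ∀ u : ℝ → ℂ, MemLp u p volume →
      eLpNorm (fun x : ℝ => (lam : ℂ) ^ 2 * ∫ y : ℝ, Kker a α x y (I * lam) * u y) p volume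
        ≤ ENNReal.ofReal C * eLpNorm u p volume := by
  have hc0 : (0 : ℝ) < 1 + a * α := by positivity
  refine ⟨2 * (1 + a * α), by positivity, ?_⟩
  intro lam hlam u hu
  set c : ℝ := 1 + a * α with hc
  set g : ℝ → ℝ≥0∞ := fun z => ENNReal.ofReal (c * lam * Real.exp (-(lam * |z|))) with hgdef
  have hgmeas : Measurable g := by
    apply ENNReal.measurable_ofReal.comp
    exact (continuous_const.mul (Real.continuous_exp.comp
      ((continuous_const.mul _root_.continuous_abs).neg))).measurable
  have hG : ∫⁻ z, g z = ENNReal.ofReal (2 * c) := lintegral_exp_abs hlam hc0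
  have hGtop : ∫⁻ z, g z ≠ ∞ := by rw [hG]; exact ENNReal.ofReal_ne_top
  set F : ℝ → ℂ := fun x : ℝ => (lam : ℂ) ^ 2 * ∫ y : ℝ, Kker a α x y (I * lam) * u y with hF
  -- pointwise bound
  have hpt : ∀ x : ℝ, (‖F x‖₊ : ℝ≥0∞) ≤ ∫⁻ y, g (x - y) * (‖u y‖₊ : ℝ≥0∞) := by
    intro x
    have hker : ∀ y : ℝ, (‖(lam : ℂ) ^ 2‖₊ : ℝ≥0∞) * (‖Kker a α x y (I * lam)‖₊ : ℝ≥0∞)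
        ≤ g (x - y) := by
      intro y
      rw [← ENNReal.coe_mul, ← nnnorm_mul, ← enorm_eq_nnnorm, ← ofReal_norm]
      apply ENNReal.ofReal_le_ofReal
      have h1 : ‖(lam : ℂ) ^ 2 * Kker a α x y (I * lam)‖ = lam ^ 2 * ‖Kker a α x y (I * lam)‖ := by
        rw [norm_mul, norm_pow, Complex.norm_real, Real.norm_eq_abs, abs_of_pos hlam]
      rw [h1]
      have h2 := kernel_bound a α lam x y ha hα hlam
      calc lam ^ 2 * ‖Kker a α x y (I * lam)‖
          ≤ lam ^ 2 * (c / lam * Real.exp (-(lam * |x - y|))) := by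
            apply mul_le_mul_of_nonneg_left h2 (by positivity)
        _ = c * lam * Real.exp (-(lam * |x - y|)) := by field_simp
    calc (‖F x‖₊ : ℝ≥0∞) = (‖(lam : ℂ) ^ 2‖₊ : ℝ≥0∞) *
          (‖∫ y : ℝ, Kker a α x y (I * lam) * u y‖₊ : ℝ≥0∞) := by
          simp only [hF, nnnorm_mul, ENNReal.coe_mul]
      _ ≤ (‖(lam : ℂ) ^ 2‖₊ : ℝ≥0∞) * ∫⁻ y, (‖Kker a α x y (I * lam) * u y‖₊ : ℝ≥0∞) :=
          mul_le_mul_right (enorm_integral_le_lintegral_enorm _) _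
      _ = ∫⁻ y, ((‖(lam : ℂ) ^ 2‖₊ : ℝ≥0∞) * (‖Kker a α x y (I * lam)‖₊ : ℝ≥0∞)) *
            (‖u y‖₊ : ℝ≥0∞) := by
          rw [← lintegral_const_mul' _ _ ENNReal.coe_ne_top]
          refine lintegral_congr fun y => ?_
          rw [nnnorm_mul, ENNReal.coe_mul, ← mul_assoc]
      _ ≤ ∫⁻ y, g (x - y) * (‖u y‖₊ : ℝ≥0∞) :=
          lintegral_mono fun y => mul_le_mul_left (hker y) _
  have hp0 : p ≠ 0 := by
    intro h
    rw [h] at hp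
    exact absurd hp (by simp)
  rcases eq_or_ne p ∞ with hptop | hpne
  · -- p = ∞
    subst hptop
    rw [eLpNorm_exponent_top, eLpNorm_exponent_top]
    have hbound : ∀ x : ℝ, (‖F x‖₊ : ℝ≥0∞) ≤
        ENNReal.ofReal (2 * c) * eLpNormEssSup u volume := by
      intro x
      refine (hpt x).trans ?_
      calc ∫⁻ y, g (x - y) * (‖u y‖₊ : ℝ≥0∞)
          ≤ ∫⁻ y, g (x - y) * eLpNormEssSup u volume := by
            refine lintegral_mono_ae ?_
            filter_upwards [ae_le_eLpNormEssSup (f := u) (μ := volume)] with y hy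
            exact mul_le_mul_right hy _
        _ = (∫⁻ y, g (x - y)) * eLpNormEssSup u volume := by
            have hm : Measurable fun y : ℝ => g (x - y) :=
              hgmeas.comp (measurable_const.sub measurable_id)
            exact lintegral_mul_const'' _ hm.aemeasurable
        _ = ENNReal.ofReal (2 * c) * eLpNormEssSup u volume := by
            rw [lintegral_shift g x, hG]
    exact essSup_le_of_ae_le _ (Filter.Eventually.of_forall hbound)
  · -- p finite
    have hq2 : (2 : ℝ) ≤ p.toReal := by
      have := (ENNReal.toReal_le_toReal (by norm_num) hpne).mpr hp
      simpa using this
    have hq1 : (1 : ℝ) < p.toReal := by linarith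
    have hq0 : (0 : ℝ) < p.toReal := by linarith
    set q : ℝ := p.toReal with hqdef
    rw [eLpNorm_eq_lintegral_rpow_enorm_toReal hp0 hpne, eLpNorm_eq_lintegral_rpow_enorm_toReal hp0 hpne]
    have hY := young hq1 g hgmeas hGtop (fun y => (‖u y‖₊ : ℝ≥0∞)) hu.1.aemeasurable.enorm
    have hstep1 : ∫⁻ x, (‖F x‖₊ : ℝ≥0∞) ^ q ≤
        ∫⁻ x, (∫⁻ y, g (x - y) * (‖u y‖₊ : ℝ≥0∞)) ^ q :=
      lintegral_mono fun x => ENNReal.rpow_le_rpow (hpt x) hq0.le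
    calc (∫⁻ x, (‖F x‖₊ : ℝ≥0∞) ^ q) ^ (1 / q)
        ≤ ((∫⁻ z, g z) ^ q * ∫⁻ x, (‖u x‖₊ : ℝ≥0∞) ^ q) ^ (1 / q) :=
          ENNReal.rpow_le_rpow (hstep1.trans hY) (by positivity)
      _ = (∫⁻ z, g z) * (∫⁻ x, (‖u x‖₊ : ℝ≥0∞) ^ q) ^ (1 / q) := by
          rw [ENNReal.mul_rpow_of_nonneg _ _ (by positivity), ← ENNReal.rpow_mul,
            mul_one_div, div_self (ne_of_gt hq0), ENNReal.rpow_one]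
      _ = ENNReal.ofReal (2 * c) * (∫⁻ x, (‖u x‖₊ : ℝ≥0∞) ^ q) ^ (1 / q) := by rw [hG]
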